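/- The cocycle c := Σ_{n=0}^{N−1} ad(r)^n(∂(r))/(n+1)! itself satisfies the master equation ∂(c) = (1/2)·{c, c}. -/
import Mathlib

/-- Triangle sum equals iterated sum. -/
lemma triangle_sum_aux {B : Type*} [AddCommMonoid B] (f : ℕ → ℕ → B) (M : ℕ) :
    ∑ m ∈ Finset.range M, ∑ i ∈ Finset.range (m + 1), f i (m - i)
      = ∑ i ∈ Finset.range M, ∑ j ∈ Finset.range (M - i), f i j := by
  induction M with
  | zero => simp
  | succ M ih =>
    rw [Finset.sum_range_succ, ih, Finset.sum_range_succ (fun i => ∑ j ∈ Finset.range (M + 1 - i), f i j)]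
    have h1 : ∀ i ∈ Finset.range M, ∑ j ∈ Finset.range (M + 1 - i), f i j
        = ∑ j ∈ Finset.range (M - i), f i j + f i (M - i) := by
      intro i hi
      rw [Finset.mem_range] at hi
      rw [Nat.succ_sub hi.le, Finset.sum_range_succ]
    rw [Finset.sum_congr rfl h1, Finset.sum_add_distrib, Finset.sum_range_succ]
    simp [add_assoc]

/-- The cocycle `c = Σ_{n<N} ad(r)^n(∂ r)/(n+1)!` satisfies the master equation
`∂(c) = (1/2)·{c,c}`. -/
theorem cocycle_master_equation
    (B : Type*) [CommRing B] [Algebra ℚ B]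
    (p : B →ₗ[ℚ] B) (br : B →ₗ[ℚ] B →ₗ[ℚ] B)
    (r : B) (adr : Module.End ℚ B) (hadr : ∀ x : B, adr x = br r x)
    (hppr : p (p r) = 0)
    (hder : ∀ x : B, p (br r x) = br (p r) x + br r (p x))
    (hjac : ∀ u v : B, br r (br u v) = br (br r u) v + br u (br r v))
    (N : ℕ) (hN : adr ^ N = 0)
    (hsymm : ∀ u v : B, br u v = br v u) :
    p (∑ n ∈ Finset.range N, (((n + 1).factorial : ℚ))⁻¹ • (adr ^ n) (p r))
      = (1 / 2 : ℚ) •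
          br (∑ n ∈ Finset.range N, (((n + 1).factorial : ℚ))⁻¹ • (adr ^ n) (p r))
             (∑ n ∈ Finset.range N, (((n + 1).factorial : ℚ))⁻¹ • (adr ^ n) (p r)) := by
  classical
  -- The coefficients c m
  set c : ℕ → B := fun m => Nat.casesOn m 0
    (fun k => (((k + 1).factorial : ℚ))⁻¹ • (adr ^ k) (p r)) with hcdef
  have hc0 : c 0 = 0 := rfl
  have hcsucc : ∀ k, c (k + 1) = (((k + 1).factorial : ℚ))⁻¹ • (adr ^ k) (p r) :=
    fun k => rfl
  have hc1 : c 1 = p r := by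
    have := hcsucc 0
    simpa using this
  -- adr in terms of br
  have padr : ∀ x, p (adr x) = br (p r) x + adr (p x) := by
    intro x; rw [hadr, hadr]; exact hder x
  have adrbr : ∀ u v, adr (br u v) = br (adr u) v + br u (adr v) := by
    intro u v; rw [hadr, hadr, hadr]; exact hjac u v
  -- recursion for c
  have hkey : ∀ k : ℕ, ((k + 1 : ℕ) : ℚ) • c (k + 1)
      = (if k = 0 then p r else 0) + adr (c k) := by
    intro k
    cases k with
    | zero => simp [hc1, hc0, map_zero]
    | succ n =>
      have hpow : (adr ^ (n + 1)) (p r) = adr ((adr ^ n) (p r)) := by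
        rw [pow_succ']; rfl
      have h2 : ((n + 1).factorial : ℚ) ≠ 0 := Nat.cast_ne_zero.mpr (Nat.factorial_ne_zero _)
      have h3 : ((n + 1 + 1 : ℕ) : ℚ) ≠ 0 := by positivity
      have h1 : ((n + 1 + 1).factorial : ℚ) = ((n + 1 + 1 : ℕ) : ℚ) * ((n + 1).factorial : ℚ) := by
        rw [Nat.factorial_succ]
        push_cast
        ring
      have hs : ((n + 1 + 1 : ℕ) : ℚ) * (((n + 1 + 1).factorial : ℚ))⁻¹
          = (((n + 1).factorial : ℚ))⁻¹ := by
        rw [h1, mul_inv, ← mul_assoc, mul_inv_cancel₀ h3, one_mul]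
      rw [if_neg (Nat.succ_ne_zero n), zero_add, hcsucc (n + 1), hcsucc n, map_smul,
        smul_smul, hs, hpow]
  -- c vanishes beyond N
  have hcz : ∀ m, N < m → c m = 0 := by
    intro m hm
    obtain ⟨k, rfl⟩ : ∃ k, m = k + 1 := ⟨m - 1, by omega⟩
    rw [hcsucc]
    obtain ⟨t, rfl⟩ : ∃ t, k = N + t := ⟨k - N, by omega⟩
    have : (adr ^ (N + t)) (p r) = 0 := by
      rw [pow_add, hN]; simp
    rw [this, smul_zero]
  -- the obstruction G
  set G : ℕ → B := fun k => p (c k)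
      - (1 / 2 : ℚ) • ∑ i ∈ Finset.range (k + 1), br (c i) (c (k - i)) with hGdef
  -- key recursion for G
  have hGrec : ∀ k : ℕ, ((k + 1 : ℕ) : ℚ) • G (k + 1) = adr (G k) := by
    intro k
    have hA : ((k + 1 : ℕ) : ℚ) • p (c (k + 1)) = br (p r) (c k) + adr (p (c k)) := by
      rw [← map_smul, hkey k]
      rw [map_add, padr]
      cases k with
      | zero => simp [hc0, hppr, map_zero]
      | succ n => simp
    -- the bracket part
    have hT : ((k + 1 : ℕ) : ℚ) • ∑ i ∈ Finset.range (k + 2), br (c i) (c (k + 1 - i))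
        = (2 : ℚ) • br (p r) (c k)
          + adr (∑ i ∈ Finset.range (k + 1), br (c i) (c (k - i))) := by
      -- step 1: (k+1) • Σ = Σ (i + (k+1-i)) • term = 2 Σ i • term
      have e1 : ((k + 1 : ℕ) : ℚ) • ∑ i ∈ Finset.range (k + 2), br (c i) (c (k + 1 - i))
          = ∑ i ∈ Finset.range (k + 2),
              ((i : ℚ) • br (c i) (c (k + 1 - i))
                + ((k + 1 - i : ℕ) : ℚ) • br (c i) (c (k + 1 - i))) := by
        rw [Finset.smul_sum]
        refine Finset.sum_congr rfl fun i hi => ?_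
        rw [Finset.mem_range] at hi
        rw [← add_smul]
        congr 1
        have : (k + 1 - i : ℕ) = k + 1 - i := rfl
        push_cast [Nat.cast_sub (by omega : i ≤ k + 1)]
        ring
      -- reflection: Σ (k+1-i) • br c_i c_{k+1-i} = Σ i • br c_i c_{k+1-i}
      have e2 : ∑ i ∈ Finset.range (k + 2), ((k + 1 - i : ℕ) : ℚ) • br (c i) (c (k + 1 - i))
          = ∑ i ∈ Finset.range (k + 2), (i : ℚ) • br (c i) (c (k + 1 - i)) := by
        rw [← Finset.sum_range_reflect
          (fun i => ((k + 1 - i : ℕ) : ℚ) • br (c i) (c (k + 1 - i))) (k + 2)]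
        refine Finset.sum_congr rfl fun j hj => ?_
        rw [Finset.mem_range] at hj
        have h1 : k + 2 - 1 - j = k + 1 - j := by omega
        have h2 : k + 1 - (k + 1 - j) = j := by omega
        rw [h1, h2, hsymm]
      -- shift: Σ_{i<k+2} i • br c_i c_{k+1-i} = br (p r) (c k) + Σ_{i<k+1} br (adr c_i) (c (k-i))
      have e3 : ∑ i ∈ Finset.range (k + 2), (i : ℚ) • br (c i) (c (k + 1 - i))
          = br (p r) (c k) + ∑ i ∈ Finset.range (k + 1), br (adr (c i)) (c (k - i)) := by
        rw [Finset.sum_range_succ' (fun i => (i : ℚ) • br (c i) (c (k + 1 - i))) (k + 1)]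
        simp only [Nat.cast_zero, zero_smul, add_zero, Nat.cast_add, Nat.cast_one]
        have : ∀ i ∈ Finset.range (k + 1),
            ((i : ℚ) + 1) • br (c (i + 1)) (c (k + 1 - (i + 1)))
              = br ((if i = 0 then p r else 0) + adr (c i)) (c (k - i)) := by
          intro i hi
          have hki : k + 1 - (i + 1) = k - i := by omega
          rw [hki, ← hkey i]
          have hcast : ((i : ℚ) + 1) = ((i + 1 : ℕ) : ℚ) := by push_cast; ring
          rw [hcast]
          simp [LinearMap.map_smul₂, hcsucc]
        rw [Finset.sum_congr rfl this]
        simp only [map_add, LinearMap.add_apply]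
        rw [Finset.sum_add_distrib]
        congr 1
        rw [Finset.sum_eq_single 0]
        · simp
        · intro b _ hb; simp [hb]
        · intro h; simp at h
      -- symmetrize: Σ br (adr c_i) c_{k-i} = ½ adr (Σ br c_i c_{k-i})
      have e4 : adr (∑ i ∈ Finset.range (k + 1), br (c i) (c (k - i)))
          = (2 : ℚ) • ∑ i ∈ Finset.range (k + 1), br (adr (c i)) (c (k - i)) := by
        rw [map_sum]
        have : ∀ i ∈ Finset.range (k + 1),
            adr (br (c i) (c (k - i)))
              = br (adr (c i)) (c (k - i)) + br (c i) (adr (c (k - i))) :=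
          fun i _ => adrbr _ _
        rw [Finset.sum_congr rfl this, Finset.sum_add_distrib]
        have e5 : ∑ i ∈ Finset.range (k + 1), br (c i) (adr (c (k - i)))
            = ∑ i ∈ Finset.range (k + 1), br (adr (c i)) (c (k - i)) := by
          rw [← Finset.sum_range_reflect (fun i => br (c i) (adr (c (k - i)))) (k + 1)]
          refine Finset.sum_congr rfl fun j hj => ?_
          rw [Finset.mem_range] at hj
          have h1 : k + 1 - 1 - j = k - j := by omega
          have h2 : k - (k - j) = j := by omega
          rw [h1, h2, hsymm]
        rw [e5, two_smul]
      rw [e1, Finset.sum_add_distrib, e2, e3]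
      rw [e4]
      rw [two_smul, two_smul]
      abel
    -- assemble
    rw [hGdef]
    simp only []
    rw [smul_sub, hA, map_sub]
    rw [smul_comm ((k + 1 : ℕ) : ℚ) ((1:ℚ)/2), hT]
    rw [map_smul]
    rw [smul_add]
    have h2 : (1 / 2 : ℚ) • (2 : ℚ) • br (p r) (c k) = br (p r) (c k) := by
      rw [smul_smul]; norm_num
    rw [h2]
    abel
  -- G vanishes
  have hG : ∀ k, G k = 0 := by
    intro k
    induction k with
    | zero => simp [hGdef, hc0, map_zero]
    | succ n ih =>
      have := hGrec n
      rw [ih, map_zero] at this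
      have hne : ((n + 1 : ℕ) : ℚ) ≠ 0 := by positivity
      exact (smul_eq_zero.mp this).resolve_left hne
  -- consequence: p (c k) = ½ Σ br c_i c_{k-i}
  have hpc : ∀ k, p (c k)
      = (1 / 2 : ℚ) • ∑ i ∈ Finset.range (k + 1), br (c i) (c (k - i)) := by
    intro k
    have := hG k
    rw [hGdef] at this
    simp only [sub_eq_zero] at this
    exact this
  -- the target sum
  set S := ∑ n ∈ Finset.range N, (((n + 1).factorial : ℚ))⁻¹ • (adr ^ n) (p r) with hSdef
  set M := 2 * N + 2 with hMdef
  have hS : S = ∑ m ∈ Finset.range M, c m := by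
    have h1 : S = ∑ n ∈ Finset.range N, c (n + 1) :=
      Finset.sum_congr rfl fun n _ => (hcsucc n).symm
    have h2 : ∑ m ∈ Finset.range (N + 1), c m = ∑ n ∈ Finset.range N, c (n + 1) + c 0 :=
      Finset.sum_range_succ' c N
    have h3 : ∑ m ∈ Finset.range (N + 1), c m = ∑ m ∈ Finset.range M, c m := by
      refine Finset.sum_subset (Finset.range_subset_range.mpr (by omega)) ?_
      intro m hm hnm
      rw [Finset.mem_range] at hm
      rw [Finset.mem_range, not_lt] at hnm
      exact hcz m (by omega)
    rw [h1, ← h3, h2, hc0, add_zero]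
  -- now compute
  rw [hS]
  rw [map_sum]
  have lhs_eq : ∑ m ∈ Finset.range M, p (c m)
      = (1 / 2 : ℚ) • ∑ m ∈ Finset.range M,
          ∑ i ∈ Finset.range (m + 1), br (c i) (c (m - i)) := by
    rw [Finset.smul_sum]
    exact Finset.sum_congr rfl fun m _ => hpc m
  rw [lhs_eq]
  congr 1
  -- triangle sum = full square sum
  rw [triangle_sum_aux (fun i j => br (c i) (c j)) M]
  have hbr : br (∑ m ∈ Finset.range M, c m) (∑ m ∈ Finset.range M, c m)
      = ∑ i ∈ Finset.range M, ∑ j ∈ Finset.range M, br (c i) (c j) := by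
    rw [map_sum br c (Finset.range M), LinearMap.sum_apply]
    exact Finset.sum_congr rfl fun i _ => map_sum _ _ _
  rw [hbr]
  refine Finset.sum_congr rfl fun i hi => ?_
  refine Finset.sum_subset (Finset.range_subset_range.mpr (by omega)) ?_
  intro j hj hnj
  rw [Finset.mem_range] at hj
  rw [Finset.mem_range, not_lt] at hnj
  rw [Finset.mem_range] at hi
  -- i + j ≥ M = 2N+2, so i > N or j > N
  by_cases hiN : N < i
  · rw [hcz i hiN]; simp
  · have : N < j := by omega
    rw [hcz j this]; simp
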